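/- The partition function of weighted Schröder paths admits the summation formula $Z_{(i,0)\to(0,j)} = \sum_{k=0}^{\min(i,j)} \gamma^k q^{k^2} \begin{bmatrix} i+j-k \\ j-k, k, i-k \end{bmatrix}_{q^2}$, where $\begin{bmatrix} a+b+c \\ a,b,c \end{bmatrix}_{q^2} = \frac{\prod_{s=1}^{a+b+c}(q^{2s}-1)}{\prod_{s=1}^{a}(q^{2s}-1)\prod_{s=1}^{b}(q^{2s}-1)\prod_{s=1}^{c}(q^{2s}-1)}$ is the $q^2$-trinomial coefficient. -/
import Mathlib

/-- A step of a Schröder path: up `(0,1)`, left `(-1,0)`, or diagonal `(-1,1)`. -/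
inductive SStep
  | up
  | left
  | diag
deriving DecidableEq

instance : Fintype SStep :=
  ⟨{SStep.up, SStep.left, SStep.diag}, by intro s; cases s <;> decide⟩

/-- The result of taking a step from a given position. -/
def stepMove : ℤ × ℤ → SStep → ℤ × ℤ
  | (x, y), SStep.up => (x, y + 1)
  | (x, y), SStep.left => (x - 1, y)
  | (x, y), SStep.diag => (x - 1, y + 1)

/-- Endpoint of a walk starting at `p` and taking the steps in the list. -/
def endPos : ℤ × ℤ → List SStep → ℤ × ℤ
  | p, [] => p
  | p, s :: rest => endPos (stepMove p s) rest

/-- The area to the left of the path, `∑ (x_s + x_{s+1}) (y_{s+1} - y_s)`: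
an up step from `(x,y)` contributes `2x`, a diagonal step `2x - 1`, a left step `0`. -/
def areaOf : ℤ × ℤ → List SStep → ℤ
  | _, [] => 0
  | (x, y), SStep.up :: rest => 2 * x + areaOf (x, y + 1) rest
  | (x, y), SStep.left :: rest => areaOf (x - 1, y) rest
  | (x, y), SStep.diag :: rest => (2 * x - 1) + areaOf (x - 1, y + 1) rest

/-- All lists of steps of length `n`. -/
def allLists : ℕ → Finset (List SStep)
  | 0 => {[]}
  | n + 1 => Finset.univ.biUnion fun s : SStep => (allLists n).image fun l => s :: l

/-- The (finite) set of Schröder paths from `(i,0)` to `(0,j)`, encoded as their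
lists of steps read from the starting point `(i,0)`. -/
def pathFinset (i j : ℕ) : Finset (List SStep) :=
  ((Finset.range (i + j + 1)).biUnion allLists).filter
    fun p => endPos ((i : ℤ), 0) p = (0, (j : ℤ))

/-- Number of diagonal steps of a path. -/
def diagCount (p : List SStep) : ℕ := p.count SStep.diag

/-- The partition function `Z_{(i,0)→(0,j)} = ∑_p γ^{k(p)} q^{A(p)}` of weighted
Schröder paths from `(i,0)` to `(0,j)`. -/
def Zpf {R : Type*} [CommRing R] (γ q : R) (i j : ℕ) : R :=
  ∑ p ∈ pathFinset i j, γ ^ diagCount p * q ^ (areaOf ((i : ℤ), 0) p).toNat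

/-- The `q²`-trinomial coefficient `[a+b+c; a,b,c]_{q²}`. -/
def qTrinom {K : Type*} [Field K] (q : K) (a b c : ℕ) : K :=
  (∏ s ∈ Finset.Icc 1 (a + b + c), (q ^ (2 * s) - 1)) /
    ((∏ s ∈ Finset.Icc 1 a, (q ^ (2 * s) - 1)) * (∏ s ∈ Finset.Icc 1 b, (q ^ (2 * s) - 1)) *
      (∏ s ∈ Finset.Icc 1 c, (q ^ (2 * s) - 1)))



lemma mem_allLists (p : List SStep) (n : ℕ) : p ∈ allLists n ↔ p.length = n := by
  induction n generalizing p with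
  | zero => simp [allLists, List.length_eq_zero_iff]
  | succ n ih =>
    cases p with
    | nil => simp [allLists]
    | cons s t =>
      simp only [allLists, Finset.mem_biUnion, Finset.mem_univ, Finset.mem_image, true_and,
        List.length_cons]
      constructor
      · rintro ⟨a, l, hl, he⟩
        injection he with h1 h2
        rw [h2] at hl
        rw [(ih t).mp hl]
      · rintro h
        exact ⟨s, t, (ih t).mpr (Nat.succ_injective h), rfl⟩

lemma endPos_eq (p : List SStep) (x y : ℤ) :
    endPos (x, y) p = (x - (p.count SStep.left + p.count SStep.diag),
      y + (p.count SStep.up + p.count SStep.diag)) := by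
  induction p generalizing x y with
  | nil => simp [endPos]
  | cons s t ih =>
    cases s <;> simp [endPos, stepMove, ih, List.count_cons] <;> push_cast <;>
      first | omega | trivial

lemma endPos_fst_le (p : List SStep) (x y : ℤ) : (endPos (x, y) p).1 ≤ x := by
  rw [endPos_eq]; simp; positivity

lemma areaOf_y (p : List SStep) (x y y' : ℤ) : areaOf (x, y) p = areaOf (x, y') p := by
  induction p generalizing x y y' with
  | nil => rfl
  | cons s t ih => cases s <;> simp [areaOf] <;> rw [ih _ _ (y' + 1)] <;> try rw [ih _ _ y']

lemma areaOf_nonneg (p : List SStep) (x y : ℤ) (h : 0 ≤ (endPos (x, y) p).1) :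
    0 ≤ areaOf (x, y) p := by
  induction p generalizing x y with
  | nil => simp [areaOf]
  | cons s t ih =>
    have hle : ∀ x' y' : ℤ, (endPos (x', y') t).1 ≤ x' := fun x' y' => endPos_fst_le t x' y'
    cases s <;> simp only [areaOf, endPos, stepMove] at h ⊢
    · have := ih x (y+1) h
      have := le_trans h (hle x (y+1))
      linarith
    · exact ih _ _ h
    · have := ih (x-1) (y+1) h
      have := le_trans h (hle (x-1) (y+1))
      linarith

lemma mem_pathFinset (p : List SStep) (i j : ℕ) :
    p ∈ pathFinset i j ↔ endPos ((i : ℤ), 0) p = (0, (j : ℤ)) := by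
  constructor
  · intro h; exact (Finset.mem_filter.mp h).2
  · intro h
    rw [pathFinset, Finset.mem_filter]
    refine ⟨Finset.mem_biUnion.mpr ⟨p.length, ?_, (mem_allLists p _).mpr rfl⟩, h⟩
    rw [endPos_eq, Prod.mk.injEq] at h
    have h1 : (i : ℤ) - (p.count SStep.left + p.count SStep.diag) = 0 := h.1
    have h2 : (0 : ℤ) + (p.count SStep.up + p.count SStep.diag) = j := h.2
    have hl : p.length = p.count SStep.up + p.count SStep.left + p.count SStep.diag := by
      clear h h1 h2
      induction p with
      | nil => simp
      | cons s t ih => cases s <;> simp [List.count_cons, ih] <;> omega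
    rw [Finset.mem_range]
    omega

lemma count_eq_zero_all (p : List SStep)
    (hl : p.count SStep.left = 0) (hd : p.count SStep.diag = 0) :
    p = List.replicate (p.count SStep.up) SStep.up := by
  have hlen : p.length = p.count SStep.up := by
    induction p with
    | nil => simp
    | cons s t ih =>
      cases s <;> simp [List.count_cons] at hl hd ⊢ <;> simp [ih hl hd] <;> omega
  rw [List.eq_replicate_iff]
  refine ⟨hlen, fun b hb => ?_⟩
  cases b with
  | up => rfl
  | left => exact absurd (List.count_pos_iff.mpr hb) (by omega)
  | diag => exact absurd (List.count_pos_iff.mpr hb) (by omega)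

lemma pathFinset_zero_left (j : ℕ) : pathFinset 0 j = {List.replicate j SStep.up} := by
  ext p
  rw [mem_pathFinset, Finset.mem_singleton]
  constructor
  · intro h
    rw [endPos_eq, Prod.mk.injEq] at h
    have h1 := h.1; have h2 := h.2
    have hl : p.count SStep.left = 0 ∧ p.count SStep.diag = 0 := by
      constructor <;> omega
    have hu : p.count SStep.up = j := by omega
    rw [← hu]; exact count_eq_zero_all p hl.1 hl.2
  · rintro rfl
    rw [endPos_eq, Prod.mk.injEq]
    simp [List.count_replicate]

lemma pathFinset_zero_right (i : ℕ) : pathFinset i 0 = {List.replicate i SStep.left} := by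
  ext p
  rw [mem_pathFinset, Finset.mem_singleton]
  constructor
  · intro h
    rw [endPos_eq, Prod.mk.injEq] at h
    have h1 := h.1; have h2 := h.2
    have hu : p.count SStep.up = 0 := by omega
    have hd : p.count SStep.diag = 0 := by omega
    have hli : p.count SStep.left = i := by omega
    have hlen : p.length = p.count SStep.left := by
      clear h h1 h2 hli
      induction p with
      | nil => simp
      | cons s t ih =>
        cases s <;> simp [List.count_cons] at hu hd ⊢ <;> simp [ih hu hd] <;> omega
    rw [← hli]
    rw [List.eq_replicate_iff]
    refine ⟨hlen, fun b hb => ?_⟩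
    cases b with
    | left => rfl
    | up => exact absurd (List.count_pos_iff.mpr hb) (by omega)
    | diag => exact absurd (List.count_pos_iff.mpr hb) (by omega)
  · rintro rfl
    rw [endPos_eq, Prod.mk.injEq]
    simp [List.count_replicate]

lemma areaOf_replicate_up (j : ℕ) (y : ℤ) : areaOf (0, y) (List.replicate j SStep.up) = 0 := by
  induction j generalizing y with
  | zero => simp [areaOf]
  | succ n ih => simp [List.replicate_succ, areaOf, ih]

lemma areaOf_replicate_left (i : ℕ) (x y : ℤ) :
    areaOf (x, y) (List.replicate i SStep.left) = 0 := by
  induction i generalizing x y with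
  | zero => simp [areaOf]
  | succ n ih => simp [List.replicate_succ, areaOf, ih]

lemma Zpf_zero_left {R : Type*} [CommRing R] (γ q : R) (j : ℕ) : Zpf γ q 0 j = 1 := by
  rw [Zpf, pathFinset_zero_left, Finset.sum_singleton]
  have h0 : ((0:ℕ):ℤ) = (0:ℤ) := rfl
  rw [h0, areaOf_replicate_up]
  simp [diagCount, List.count_replicate]

lemma Zpf_zero_right {R : Type*} [CommRing R] (γ q : R) (i : ℕ) : Zpf γ q i 0 = 1 := by
  rw [Zpf, pathFinset_zero_right, Finset.sum_singleton]
  simp [diagCount, List.count_replicate, areaOf_replicate_left]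

lemma pathFinset_succ_succ (i j : ℕ) :
    pathFinset (i+1) (j+1) =
      (((pathFinset (i+1) j).image (fun t => SStep.up :: t)) ∪
      ((pathFinset i (j+1)).image (fun t => SStep.left :: t))) ∪
      ((pathFinset i j).image (fun t => SStep.diag :: t)) := by
  ext p
  simp only [Finset.mem_union, Finset.mem_image, mem_pathFinset]
  cases p with
  | nil =>
    simp only [endPos, Prod.mk.injEq]
    constructor
    · rintro ⟨h, -⟩; exfalso; exact_mod_cast (by omega : ((i:ℤ)+1) ≠ 0) (by exact_mod_cast h)
    · rintro ((⟨a, -, h⟩ | ⟨a, -, h⟩) | ⟨a, -, h⟩) <;> simp at h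
  | cons s t =>
    have key : ∀ (x' y' : ℤ) (a b : ℤ), endPos (x', y' + 1) t = (a, b + 1)
        ↔ endPos (x', y') t = (a, b) := by
      intro x' y' a b
      rw [endPos_eq, endPos_eq, Prod.mk.injEq, Prod.mk.injEq]
      constructor <;> rintro ⟨h1, h2⟩ <;> exact ⟨h1, by omega⟩
    cases s <;>
      simp only [endPos, stepMove, List.cons.injEq, reduceCtorEq, false_and, and_false,
        exists_false, or_false, false_or, true_and, and_true, exists_eq_right]
    · push_cast
      exact key (↑i + 1) 0 0 ↑j
    · push_cast
      rw [show (i:ℤ)+1-1 = (i:ℤ) by ring]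
    · push_cast
      rw [show (i:ℤ)+1-1 = (i:ℤ) by ring]
      exact key (↑i) 0 0 ↑j

lemma cons_inj (s : SStep) : Function.Injective (fun t : List SStep => s :: t) := by
  intro a b h; simpa using h

lemma areaOf_cons_up (x y : ℤ) (t : List SStep) :
    areaOf (x, y) (SStep.up :: t) = 2*x + areaOf (x, 0) t := by
  show 2*x + areaOf (x, y+1) t = _
  rw [areaOf_y t x (y+1) 0]

lemma areaOf_cons_left (x y : ℤ) (t : List SStep) :
    areaOf (x, y) (SStep.left :: t) = areaOf (x - 1, 0) t := by
  show areaOf (x-1, y) t = _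
  rw [areaOf_y t (x-1) y 0]

lemma areaOf_cons_diag (x y : ℤ) (t : List SStep) :
    areaOf (x, y) (SStep.diag :: t) = (2*x - 1) + areaOf (x - 1, 0) t := by
  show (2*x-1) + areaOf (x-1, y+1) t = _
  rw [areaOf_y t (x-1) (y+1) 0]

lemma Zpf_rec {R : Type*} [CommRing R] (γ q : R) (i j : ℕ) :
    Zpf γ q (i+1) (j+1) = q^(2*(i+1)) * Zpf γ q (i+1) j + Zpf γ q i (j+1)
      + γ * q^(2*i+1) * Zpf γ q i j := by
  have hd1 : Disjoint ((pathFinset (i+1) j).image (fun t => SStep.up :: t))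
      ((pathFinset i (j+1)).image (fun t => SStep.left :: t)) := by
    rw [Finset.disjoint_left]
    rintro p hp hq
    simp only [Finset.mem_image] at hp hq
    obtain ⟨a, -, rfl⟩ := hp
    obtain ⟨b, -, h⟩ := hq
    simp at h
  have hd2 : Disjoint (((pathFinset (i+1) j).image (fun t => SStep.up :: t)) ∪
      ((pathFinset i (j+1)).image (fun t => SStep.left :: t)))
      ((pathFinset i j).image (fun t => SStep.diag :: t)) := by
    rw [Finset.disjoint_left]
    rintro p hp hq
    simp only [Finset.mem_union, Finset.mem_image] at hp hq
    obtain ⟨b, -, h⟩ := hq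
    rcases hp with ⟨a, -, rfl⟩ | ⟨a, -, rfl⟩ <;> simp at h
  have hc : ((i+1:ℕ):ℤ) = (i:ℤ)+1 := by push_cast; ring
  rw [Zpf, pathFinset_succ_succ, Finset.sum_union hd2, Finset.sum_union hd1,
    Finset.sum_image (fun a _ b _ h => cons_inj _ h),
    Finset.sum_image (fun a _ b _ h => cons_inj _ h),
    Finset.sum_image (fun a _ b _ h => cons_inj _ h)]
  congr 1
  congr 1
  · -- up part
    rw [Zpf, Finset.mul_sum]
    apply Finset.sum_congr rfl
    intro t ht
    rw [mem_pathFinset] at ht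
    have hnn : 0 ≤ areaOf (((i+1:ℕ):ℤ), 0) t := by
      apply areaOf_nonneg
      rw [ht]
    show γ ^ diagCount (SStep.up :: t) * q ^ (areaOf _ (SStep.up :: t)).toNat = _
    rw [areaOf_cons_up]
    have h2 : (2*((i+1:ℕ):ℤ) + areaOf (((i+1:ℕ):ℤ), 0) t).toNat
        = 2*(i+1) + (areaOf (((i+1:ℕ):ℤ), 0) t).toNat := by
      omega
    rw [h2, pow_add]
    have hdc : diagCount (SStep.up :: t) = diagCount t := by
      simp [diagCount, List.count_cons]
    rw [hdc]
    ring
  · -- left part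
    rw [Zpf]
    apply Finset.sum_congr rfl
    intro t ht
    show γ ^ diagCount (SStep.left :: t) * q ^ (areaOf _ (SStep.left :: t)).toNat = _
    rw [areaOf_cons_left]
    have hx : ((i+1:ℕ):ℤ) - 1 = ((i:ℕ):ℤ) := by push_cast; ring
    rw [hx]
    have hdc : diagCount (SStep.left :: t) = diagCount t := by
      simp [diagCount, List.count_cons]
    rw [hdc]
  · -- diag part
    rw [Zpf, Finset.mul_sum]
    apply Finset.sum_congr rfl
    intro t ht
    rw [mem_pathFinset] at ht
    have hnn : 0 ≤ areaOf ((i:ℤ), 0) t := by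
      apply areaOf_nonneg
      rw [ht]
    show γ ^ diagCount (SStep.diag :: t) * q ^ (areaOf _ (SStep.diag :: t)).toNat = _
    rw [areaOf_cons_diag]
    have hx : ((i+1:ℕ):ℤ) - 1 = ((i:ℕ):ℤ) := by push_cast; ring
    rw [hx]
    have h2 : (2*((i+1:ℕ):ℤ) - 1 + areaOf ((i:ℤ), 0) t).toNat
        = (2*i+1) + (areaOf ((i:ℤ), 0) t).toNat := by
      omega
    rw [h2, pow_add]
    have hdc : diagCount (SStep.diag :: t) = diagCount t + 1 := by
      simp [diagCount, List.count_cons]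
    rw [hdc, pow_succ]
    ring

section Alg
variable {K : Type*} [Field K]

def Pprod (q : K) (n : ℕ) : K := ∏ s ∈ Finset.Icc 1 n, (q ^ (2 * s) - 1)

def Bq (q : K) (a b : ℕ) : K := Pprod q (a + b) / (Pprod q a * Pprod q b)

lemma Pprod_zero (q : K) : Pprod q 0 = 1 := by simp [Pprod]

lemma Pprod_succ (q : K) (n : ℕ) : Pprod q (n + 1) = Pprod q n * (q ^ (2 * (n + 1)) - 1) := by
  rw [Pprod, Pprod, Finset.prod_Icc_succ_top (by omega)]

lemma Pprod_ne_zero (q : K) (n : ℕ) (h : ∀ s : ℕ, 1 ≤ s → s ≤ n → q ^ (2 * s) ≠ 1) :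
    Pprod q n ≠ 0 := by
  rw [Pprod]
  apply Finset.prod_ne_zero_iff.mpr
  intro s hs
  rw [Finset.mem_Icc] at hs
  exact sub_ne_zero.mpr (h s hs.1 hs.2)

lemma Bq_symm (q : K) (a b : ℕ) : Bq q a b = Bq q b a := by
  rw [Bq, Bq, add_comm, mul_comm]

lemma Bq_zero_left (q : K) (b : ℕ) (h : Pprod q b ≠ 0) : Bq q 0 b = 1 := by
  rw [Bq, Pprod_zero, zero_add, one_mul, div_self h]

lemma Bq_zero_right (q : K) (a : ℕ) (h : Pprod q a ≠ 0) : Bq q a 0 = 1 := by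
  rw [Bq_symm, Bq_zero_left q a h]

lemma Pascal2 (q : K) (a b : ℕ) (ha : Pprod q (a + 1) ≠ 0) (hb : Pprod q (b + 1) ≠ 0) :
    Bq q (a + 1) (b + 1) = q ^ (2 * (b + 1)) * Bq q a (b + 1) + Bq q (a + 1) b := by
  have hxa : Pprod q (a + 1) = Pprod q a * (q ^ (2 * (a + 1)) - 1) := Pprod_succ q a
  have hxb : Pprod q (b + 1) = Pprod q b * (q ^ (2 * (b + 1)) - 1) := Pprod_succ q b
  have ha0 : Pprod q a ≠ 0 := fun h => ha (by rw [hxa, h, zero_mul])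
  have hb0 : Pprod q b ≠ 0 := fun h => hb (by rw [hxb, h, zero_mul])
  have hx : q ^ (2 * (a + 1)) - 1 ≠ 0 := fun h => ha (by rw [hxa, h, mul_zero])
  have hy : q ^ (2 * (b + 1)) - 1 ≠ 0 := fun h => hb (by rw [hxb, h, mul_zero])
  have htop : Pprod q ((a + 1) + (b + 1)) = Pprod q (a + b + 1) * (q ^ (2 * (a + b + 2)) - 1) := by
    rw [show (a + 1) + (b + 1) = (a + b + 1) + 1 by ring, Pprod_succ]
  have h1 : (a : ℕ) + (b + 1) = a + b + 1 := by ring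
  have h2 : (a + 1) + b = a + b + 1 := by ring
  rw [Bq, Bq, Bq, htop, h1, h2, hxa, hxb]
  field_simp
  ring
end Alg

section Alg2
variable {K : Type*} [Field K]

lemma qTrinom_eq_B (q : K) (a b c : ℕ) (h : Pprod q (b + c) ≠ 0) :
    qTrinom q a b c = Bq q a (b + c) * Bq q b c := by
  have hd : qTrinom q a b c
      = Pprod q (a + b + c) / (Pprod q a * Pprod q b * Pprod q c) := rfl
  rw [hd, Bq, Bq, div_mul_div_comm,
    show Pprod q a * Pprod q (b + c) * (Pprod q b * Pprod q c)
      = (Pprod q a * Pprod q b * Pprod q c) * Pprod q (b + c) by ring,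
    show a + (b + c) = a + b + c by ring,
    mul_div_mul_right _ _ h]

/-- Extension of the trinomial by zero to negative indices. -/
def Fq (q : K) (a : ℤ) (b : ℕ) (c : ℤ) : K :=
  if 0 ≤ a ∧ 0 ≤ c then Bq q a.toNat (b + c.toNat) * Bq q b c.toNat else 0

lemma Fq_nat (q : K) (a b c : ℕ) : Fq q (a : ℤ) b (c : ℤ) = Bq q a (b + c) * Bq q b c := by
  rw [Fq, if_pos ⟨Int.natCast_nonneg a, Int.natCast_nonneg c⟩, Int.toNat_natCast,
    Int.toNat_natCast]

lemma Fq_neg_left (q : K) (a : ℤ) (b : ℕ) (c : ℤ) (h : a < 0) : Fq q a b c = 0 := by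
  rw [Fq, if_neg]; rintro ⟨h1, -⟩; omega

lemma Fq_neg_right (q : K) (a : ℤ) (b : ℕ) (c : ℤ) (h : c < 0) : Fq q a b c = 0 := by
  rw [Fq, if_neg]; rintro ⟨-, h2⟩; omega

/-- One term of the extended sum. -/
def Fterm (γ q : K) (i j k : ℕ) : K :=
  γ ^ k * q ^ (k ^ 2) * Fq q ((j : ℤ) - k) k ((i : ℤ) - k)

lemma key_pointwise (γ q : K) (i j k : ℕ)
    (hP : ∀ n : ℕ, n ≤ i + j + 2 → Pprod q n ≠ 0) :
    Fterm γ q (i+1) (j+1) k = q ^ (2*(i+1)) * Fterm γ q (i+1) j k + Fterm γ q i (j+1) k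
      + (if k = 0 then 0 else γ * q ^ (2*i+1) * Fterm γ q i j (k-1)) := by
  rcases k with _ | m
  · -- k = 0
    rw [if_pos rfl, add_zero]
    simp only [Fterm, pow_zero, one_mul, Nat.cast_zero, sub_zero, Nat.cast_add, Nat.cast_one]
    rw [show ((j:ℤ) + 1) = ((j+1 : ℕ) : ℤ) by push_cast; ring,
      show ((i:ℤ) + 1) = ((i+1 : ℕ) : ℤ) by push_cast; ring,
      Fq_nat, Fq_nat, Fq_nat]
    rw [Bq_zero_left q (i+1) (hP _ (by omega)), Bq_zero_left q i (hP _ (by omega))]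
    simp only [zero_add, mul_one]
    norm_num
    exact Pascal2 q j i (hP _ (by omega)) (hP _ (by omega))
  · -- k = m + 1
    rw [if_neg (by omega), Nat.add_sub_cancel]
    rcases lt_or_ge j m with hjm | hjm
    · -- j < m : all terms vanish on the left coordinate
      rw [Fterm, Fterm, Fterm, Fterm,
        Fq_neg_left q _ _ _ (by push_cast; omega),
        Fq_neg_left q _ _ _ (by push_cast; omega),
        Fq_neg_left q _ _ _ (by push_cast; omega),
        Fq_neg_left q _ _ _ (by push_cast; omega)]
      ring
    rcases lt_or_ge i m with him | him
    · -- i < m : all terms vanish on the right coordinate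
      rw [Fterm, Fterm, Fterm, Fterm,
        Fq_neg_right q _ _ _ (by push_cast; omega),
        Fq_neg_right q _ _ _ (by push_cast; omega),
        Fq_neg_right q _ _ _ (by push_cast; omega),
        Fq_neg_right q _ _ _ (by push_cast; omega)]
      ring
    · -- m ≤ j, m ≤ i
      rcases Nat.lt_or_ge m j with hj | hj
      · obtain ⟨a, rfl⟩ : ∃ a, j = m + a + 1 := ⟨j - m - 1, by omega⟩
        rcases Nat.lt_or_ge m i with hi | hi
        · -- main case
          obtain ⟨c, rfl⟩ : ∃ c, i = m + c + 1 := ⟨i - m - 1, by omega⟩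
          rw [Fterm, Fterm, Fterm, Fterm,
            show ((m+a+1+1:ℕ):ℤ) - ((m+1:ℕ):ℤ) = ((a+1:ℕ):ℤ) by push_cast; ring,
            show ((m+c+1+1:ℕ):ℤ) - ((m+1:ℕ):ℤ) = ((c+1:ℕ):ℤ) by push_cast; ring,
            show ((m+a+1:ℕ):ℤ) - ((m+1:ℕ):ℤ) = ((a:ℕ):ℤ) by push_cast; omega,
            show ((m+c+1:ℕ):ℤ) - ((m+1:ℕ):ℤ) = ((c:ℕ):ℤ) by push_cast; omega,
            show ((m+a+1:ℕ):ℤ) - ((m:ℕ):ℤ) = ((a+1:ℕ):ℤ) by push_cast; ring,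
            show ((m+c+1:ℕ):ℤ) - ((m:ℕ):ℤ) = ((c+1:ℕ):ℤ) by push_cast; ring,
            Fq_nat, Fq_nat, Fq_nat, Fq_nat]
          rw [show (m+1)+(c+1) = (m+c+1)+1 by ring, show (m+1)+c = m+c+1 by ring,
            show m+(c+1) = m+c+1 by ring]
          rw [Pascal2 q a (m+c+1) (hP _ (by omega)) (hP _ (by omega)),
            Pascal2 q m c (hP _ (by omega)) (hP _ (by omega))]
          ring
        · -- i = m : c = 0 case
          obtain rfl : m = i := by omega
          rw [Fterm, Fterm, Fterm, Fterm,
            show ((m+a+1+1:ℕ):ℤ) - ((m+1:ℕ):ℤ) = ((a+1:ℕ):ℤ) by push_cast; ring,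
            show ((m+1:ℕ):ℤ) - ((m+1:ℕ):ℤ) = ((0:ℕ):ℤ) by push_cast; ring,
            show ((m+a+1:ℕ):ℤ) - ((m+1:ℕ):ℤ) = ((a:ℕ):ℤ) by push_cast; omega,
            show ((m+a+1:ℕ):ℤ) - ((m:ℕ):ℤ) = ((a+1:ℕ):ℤ) by push_cast; ring,
            show ((m:ℕ):ℤ) - ((m:ℕ):ℤ) = ((0:ℕ):ℤ) by push_cast; ring,
            Fq_neg_right q (((a+1:ℕ):ℤ)) (m+1) (((m:ℕ):ℤ) - ((m+1:ℕ):ℤ))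
              (by push_cast; omega),
            Fq_nat, Fq_nat, Fq_nat]
          rw [Bq_zero_right q (m+1) (hP _ (by omega)), Bq_zero_right q m (hP _ (by omega)),
            Pascal2 q a m (hP _ (by omega)) (hP _ (by omega))]
          ring
      · -- j = m : a = 0 case
        obtain rfl : m = j := by omega
        rcases Nat.lt_or_ge m i with hi | hi
        · obtain ⟨c, rfl⟩ : ∃ c, i = m + c + 1 := ⟨i - m - 1, by omega⟩
          rw [Fterm, Fterm, Fterm, Fterm,
            show ((m+1:ℕ):ℤ) - ((m+1:ℕ):ℤ) = ((0:ℕ):ℤ) by push_cast; ring,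
            show ((m+c+1+1:ℕ):ℤ) - ((m+1:ℕ):ℤ) = ((c+1:ℕ):ℤ) by push_cast; ring,
            show ((m+c+1:ℕ):ℤ) - ((m+1:ℕ):ℤ) = ((c:ℕ):ℤ) by push_cast; omega,
            show ((m:ℕ):ℤ) - ((m:ℕ):ℤ) = ((0:ℕ):ℤ) by push_cast; ring,
            show ((m+c+1:ℕ):ℤ) - ((m:ℕ):ℤ) = ((c+1:ℕ):ℤ) by push_cast; ring,
            Fq_neg_left q (((m:ℕ):ℤ) - ((m+1:ℕ):ℤ)) (m+1) (((c+1:ℕ):ℤ))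
              (by push_cast; omega),
            Fq_nat, Fq_nat, Fq_nat]
          rw [Bq_zero_left q ((m+1)+(c+1)) (hP _ (by omega)),
            Bq_zero_left q ((m+1)+c) (hP _ (by omega)),
            Bq_zero_left q (m+(c+1)) (hP _ (by omega)),
            Pascal2 q m c (hP _ (by omega)) (hP _ (by omega))]
          ring
        · -- i = m = j
          obtain rfl : m = i := by omega
          rw [Fterm, Fterm, Fterm, Fterm,
            show ((m+1:ℕ):ℤ) - ((m+1:ℕ):ℤ) = ((0:ℕ):ℤ) by push_cast; ring,
            show ((m:ℕ):ℤ) - ((m:ℕ):ℤ) = ((0:ℕ):ℤ) by push_cast; ring,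
            Fq_neg_left q (((m:ℕ):ℤ) - ((m+1:ℕ):ℤ)) (m+1) (((0:ℕ):ℤ))
              (by push_cast; omega),
            Fq_neg_right q (((0:ℕ):ℤ)) (m+1) (((m:ℕ):ℤ) - ((m+1:ℕ):ℤ))
              (by push_cast; omega),
            Fq_nat, Fq_nat]
          rw [Bq_zero_left q (m+1) (hP _ (by omega)), Bq_zero_left q (m+0) (hP _ (by omega)),
            Bq_zero_right q (m+1) (hP _ (by omega)), Bq_zero_right q m (hP _ (by omega))]
          ring
end Alg2

lemma nat_min_cases' (i j : ℕ) : (Nat.min i j = i ∧ i ≤ j) ∨ (Nat.min i j = j ∧ j ≤ i) := by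
  have h : Nat.min i j = min i j := rfl
  rw [h, min_def]
  by_cases hc : i ≤ j
  · rw [if_pos hc]; exact Or.inl ⟨rfl, hc⟩
  · rw [if_neg hc]; exact Or.inr ⟨rfl, by omega⟩

section Alg3
variable {K : Type*} [Field K]

lemma Rhs_eq_sumF (γ q : K) (i j N : ℕ) (hN : Nat.min i j + 1 ≤ N) (hP : Pprod q i ≠ 0) :
    ∑ k ∈ Finset.range (Nat.min i j + 1), γ ^ k * q ^ (k ^ 2) * qTrinom q (j - k) k (i - k)
      = ∑ k ∈ Finset.range N, Fterm γ q i j k := by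
  have h1 : ∀ k ∈ Finset.range (Nat.min i j + 1),
      γ ^ k * q ^ (k ^ 2) * qTrinom q (j - k) k (i - k) = Fterm γ q i j k := by
    intro k hk
    rw [Finset.mem_range] at hk
    have hm := nat_min_cases' i j
    have hki : k ≤ i := by rcases hm with ⟨h1, h2⟩ | ⟨h1, h2⟩ <;> rw [h1] at hk <;> omega
    have hkj : k ≤ j := by rcases hm with ⟨h1, h2⟩ | ⟨h1, h2⟩ <;> rw [h1] at hk <;> omega
    rw [Fterm, show ((j:ℤ) - k) = ((j - k : ℕ) : ℤ) by push_cast [hkj]; ring,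
      show ((i:ℤ) - k) = ((i - k : ℕ) : ℤ) by push_cast [hki]; ring, Fq_nat,
      qTrinom_eq_B q (j - k) k (i - k)
        (by rw [show k + (i - k) = i by omega]; exact hP)]
  rw [Finset.sum_congr rfl h1]
  apply Finset.sum_subset (Finset.range_subset_range.mpr hN)
  intro k hk hk2
  rw [Finset.mem_range] at hk hk2
  have : j < k ∨ i < k := by
    rcases nat_min_cases' i j with ⟨h1, h2⟩ | ⟨h1, h2⟩ <;> rw [h1] at hk2 <;> omega
  rw [Fterm]
  rcases this with h | h
  · rw [Fq_neg_left q ((j:ℤ) - k) k ((i:ℤ) - k) (by push_cast; omega), mul_zero]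
  · rw [Fq_neg_right q ((j:ℤ) - k) k ((i:ℤ) - k) (by push_cast; omega), mul_zero]

lemma Rhs_zero_left (γ q : K) (j : ℕ) (hP : Pprod q j ≠ 0) :
    ∑ k ∈ Finset.range (Nat.min 0 j + 1), γ ^ k * q ^ (k ^ 2) * qTrinom q (j - k) k (0 - k)
      = 1 := by
  rw [show Nat.min 0 j = 0 from Nat.zero_min j, Finset.sum_range_one]
  have hT : qTrinom q (j - 0) 0 (0 - 0) = Pprod q (j + 0 + 0) / (Pprod q j * Pprod q 0 * Pprod q 0) := rfl
  rw [hT, Pprod_zero]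
  simp [div_self hP]

lemma Rhs_zero_right (γ q : K) (i : ℕ) (hP : Pprod q i ≠ 0) :
    ∑ k ∈ Finset.range (Nat.min i 0 + 1), γ ^ k * q ^ (k ^ 2) * qTrinom q (0 - k) k (i - k)
      = 1 := by
  rw [show Nat.min i 0 = 0 from Nat.min_zero i, Finset.sum_range_one]
  have hT : qTrinom q (0 - 0) 0 (i - 0) = Pprod q (0 + 0 + i) / (Pprod q 0 * Pprod q 0 * Pprod q i) := rfl
  rw [hT, Pprod_zero]
  simp [div_self hP]

lemma Rhs_rec (γ q : K) (i j : ℕ) (hP : ∀ n : ℕ, n ≤ i + j + 2 → Pprod q n ≠ 0) :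
    (∑ k ∈ Finset.range (Nat.min (i+1) (j+1) + 1),
        γ ^ k * q ^ (k ^ 2) * qTrinom q ((j+1) - k) k ((i+1) - k))
      = q ^ (2*(i+1)) * (∑ k ∈ Finset.range (Nat.min (i+1) j + 1),
          γ ^ k * q ^ (k ^ 2) * qTrinom q (j - k) k ((i+1) - k))
        + (∑ k ∈ Finset.range (Nat.min i (j+1) + 1),
            γ ^ k * q ^ (k ^ 2) * qTrinom q ((j+1) - k) k (i - k))
        + γ * q ^ (2*i+1) * (∑ k ∈ Finset.range (Nat.min i j + 1),
            γ ^ k * q ^ (k ^ 2) * qTrinom q (j - k) k (i - k)) := by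
  have m1 := nat_min_cases' (i+1) (j+1)
  have m2 := nat_min_cases' (i+1) j
  have m3 := nat_min_cases' i (j+1)
  have m4 := nat_min_cases' i j
  rw [Rhs_eq_sumF γ q (i+1) (j+1) (i+j+3)
      (by rcases m1 with ⟨h1,-⟩|⟨h1,-⟩ <;> rw [h1] <;> omega) (hP _ (by omega)),
    Rhs_eq_sumF γ q (i+1) j (i+j+3)
      (by rcases m2 with ⟨h1,-⟩|⟨h1,-⟩ <;> rw [h1] <;> omega) (hP _ (by omega)),
    Rhs_eq_sumF γ q i (j+1) (i+j+3)
      (by rcases m3 with ⟨h1,-⟩|⟨h1,-⟩ <;> rw [h1] <;> omega) (hP _ (by omega)),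
    Rhs_eq_sumF γ q i j (i+j+2)
      (by rcases m4 with ⟨h1,-⟩|⟨h1,-⟩ <;> rw [h1] <;> omega) (hP _ (by omega))]
  rw [Finset.sum_congr rfl (fun k _ => key_pointwise γ q i j k hP)]
  rw [Finset.sum_add_distrib, Finset.sum_add_distrib]
  have e1 : ∑ k ∈ Finset.range (i+j+3), q ^ (2*(i+1)) * Fterm γ q (i+1) j k
      = q ^ (2*(i+1)) * ∑ k ∈ Finset.range (i+j+3), Fterm γ q (i+1) j k :=
    (Finset.mul_sum _ _ _).symm
  have e2 : ∑ k ∈ Finset.range (i+j+3),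
        (if k = 0 then 0 else γ * q ^ (2*i+1) * Fterm γ q i j (k-1))
      = γ * q ^ (2*i+1) * ∑ k ∈ Finset.range (i+j+2), Fterm γ q i j k := by
    rw [Finset.sum_range_succ']
    simp only [Nat.succ_ne_zero, if_false, Nat.add_sub_cancel, reduceIte, add_zero]
    rw [Finset.mul_sum]
  rw [e1, e2]
end Alg3

/-- Summation formula for the weighted Schröder path partition function:
`Z_{(i,0)→(0,j)} = ∑_{k=0}^{min(i,j)} γ^k q^{k²} [i+j-k; j-k,k,i-k]_{q²}`. -/
theorem schroeder_partition_function_trinomial_sum {K : Type*} [Field K] (γ q : K) (i j : ℕ)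
    (hq : ∀ s : ℕ, 1 ≤ s → s ≤ i + j → q ^ (2 * s) ≠ 1) :
    Zpf γ q i j =
      ∑ k ∈ Finset.range (Nat.min i j + 1), γ ^ k * q ^ (k ^ 2) * qTrinom q (j - k) k (i - k) := by
  suffices H : ∀ n : ℕ, ∀ i j : ℕ, i + j ≤ n →
      (∀ s : ℕ, 1 ≤ s → s ≤ i + j → q ^ (2 * s) ≠ 1) →
      Zpf γ q i j = ∑ k ∈ Finset.range (Nat.min i j + 1),
        γ ^ k * q ^ (k ^ 2) * qTrinom q (j - k) k (i - k) by
    exact H (i + j) i j le_rfl hq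
  intro n
  induction n with
  | zero =>
    intro i j hij hq'
    obtain ⟨rfl, rfl⟩ : i = 0 ∧ j = 0 := by omega
    rw [Zpf_zero_left]
    exact (Rhs_zero_left γ q 0 (by rw [Pprod_zero]; exact one_ne_zero)).symm
  | succ n ih =>
    intro i j hij hq'
    cases i with
    | zero =>
      rw [Zpf_zero_left]
      exact (Rhs_zero_left γ q j (Pprod_ne_zero q j (fun s h1 h2 => hq' s h1 (by omega)))).symm
    | succ i =>
      cases j with
      | zero =>
        rw [Zpf_zero_right]
        exact (Rhs_zero_right γ q (i+1)
          (Pprod_ne_zero q (i+1) (fun s h1 h2 => hq' s h1 (by omega)))).symm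
      | succ j =>
        have hP : ∀ m : ℕ, m ≤ i + j + 2 → Pprod q m ≠ 0 := fun m hm =>
          Pprod_ne_zero q m (fun s h1 h2 => hq' s h1 (by omega))
        rw [Zpf_rec, Rhs_rec γ q i j hP,
          ih (i+1) j (by omega) (fun s h1 h2 => hq' s h1 (by omega)),
          ih i (j+1) (by omega) (fun s h1 h2 => hq' s h1 (by omega)),
          ih i j (by omega) (fun s h1 h2 => hq' s h1 (by omega))]
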